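/- Let C be an abstract simplicial complex on X. The category of separated Set-valued presheaves on C is equivalent to the category of non-degenerate simplicial maps into C (non-degenerate bundles over C), where morphisms are simplicial maps over C. The equivalence sends a non-degenerate bundle π : A → C to the presheaf U ↦ {s ∈ A : π[s] = U} with restriction maps s ↦ s ∩ π⁻¹[V]. -/

import Mathlib

open scoped Classical
open CategoryTheory

/-- An abstract simplicial complex on a vertex set `X`. -/
structure SC (X : Type) where
  faces : Set (Finset X)
  down_closed : ∀ {s t : Finset X}, s ∈ faces → t ⊆ s → t ∈ faces
  singleton_mem : ∀ x : X, {x} ∈ faces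

/-- A separated `Set`-valued presheaf on the simplicial complex `C`. -/
structure SepPsh {X : Type} (C : SC X) where
  obj : ∀ U : Finset X, U ∈ C.faces → Type
  res : ∀ {U V : Finset X} (hU : U ∈ C.faces) (hV : V ∈ C.faces),
      V ⊆ U → obj U hU → obj V hV
  res_id : ∀ {U : Finset X} (hU : U ∈ C.faces) (s : obj U hU),
      res hU hU (subset_refl U) s = s
  res_comp : ∀ {U V W : Finset X} (hU : U ∈ C.faces) (hV : V ∈ C.faces)
      (hW : W ∈ C.faces) (hVU : V ⊆ U) (hWV : W ⊆ V) (s : obj U hU),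
      res hV hW hWV (res hU hV hVU s) = res hU hW (hWV.trans hVU) s
  separated : ∀ (U : Finset X) (hU : U ∈ C.faces),
      Function.Injective (fun (s : obj U hU) (x : {x // x ∈ U}) =>
        res hU (C.singleton_mem x.1) (Finset.singleton_subset_iff.mpr x.2) s)

/-- The category of separated presheaves on `C`, with natural
transformations as morphisms. -/
instance {X : Type} (C : SC X) : Category (SepPsh C) where
  Hom P Q := {f : ∀ (U : Finset X) (hU : U ∈ C.faces), P.obj U hU → Q.obj U hU //
    ∀ (U V : Finset X) (hU : U ∈ C.faces) (hV : V ∈ C.faces) (h : V ⊆ U)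
      (s : P.obj U hU), f V hV (P.res hU hV h s) = Q.res hU hV h (f U hU s)}
  id P := ⟨fun _ _ s => s, fun _ _ _ _ _ _ => rfl⟩
  comp f g := ⟨fun U hU s => g.1 U hU (f.1 U hU s), by
    intro U V hU hV h s; dsimp only; rw [f.2, g.2]⟩
  id_comp f := rfl
  comp_id f := rfl
  assoc f g h := rfl

/-- A non-degenerate bundle over `C`: a simplicial complex on a vertex set
`E` together with a simplicial map `π` to `C` that is injective on each
simplex. -/
structure Bnd {X : Type} (C : SC X) where
  E : Type
  faces : Set (Finset E)
  down_closed : ∀ {s t : Finset E}, s ∈ faces → t ⊆ s → t ∈ faces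
  vertex_mem : ∀ e : E, {e} ∈ faces
  π : E → X
  simplicial : ∀ s ∈ faces, s.image π ∈ C.faces
  nondeg : ∀ s ∈ faces, Set.InjOn π ↑s

/-- The category of non-degenerate bundles over `C`, with simplicial maps
over `C` as morphisms. -/
instance {X : Type} (C : SC X) : Category (Bnd C) where
  Hom B1 B2 := {f : B1.E → B2.E //
    (∀ s ∈ B1.faces, s.image f ∈ B2.faces) ∧ ∀ e, B2.π (f e) = B1.π e}
  id B := ⟨id, ⟨fun s hs => by simpa using hs, fun _ => rfl⟩⟩
  comp f g := ⟨g.1 ∘ f.1, ⟨fun s hs => by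
      rw [← Finset.image_image]; exact g.2.1 _ (f.2.1 s hs),
    fun e => by simp [g.2.2, f.2.2]⟩⟩
  id_comp f := rfl
  comp_id f := rfl
  assoc f g h := rfl

/-- The separated presheaf of local sections of a non-degenerate bundle:
`P(U) = {s ∈ A : π[s] = U}`, with restrictions `s ↦ s ∩ π⁻¹[V]`. -/
noncomputable def bundlePsh {X : Type} {C : SC X} (B : Bnd C) : SepPsh C where
  obj U _ := {s : Finset B.E // s ∈ B.faces ∧ s.image B.π = U}
  res {U V} hU hV h s := ⟨s.1.filter (fun e => B.π e ∈ V),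
    B.down_closed s.2.1 (Finset.filter_subset _ _), by
      ext y; constructor
      · intro hy
        simp only [Finset.mem_image, Finset.mem_filter] at hy
        obtain ⟨e, ⟨_, hev⟩, rfl⟩ := hy; exact hev
      · intro hy
        have hyU : y ∈ U := h hy
        rw [← s.2.2] at hyU
        obtain ⟨e, he, rfl⟩ := Finset.mem_image.mp hyU
        exact Finset.mem_image.mpr ⟨e, Finset.mem_filter.mpr ⟨he, hy⟩, rfl⟩⟩
  res_id hU s := Subtype.ext (Finset.filter_true_of_mem
    (fun e he => s.2.2 ▸ Finset.mem_image_of_mem _ he))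
  res_comp {U V W} hU hV hW hVU hWV s := by
    apply Subtype.ext
    simp only [Finset.filter_filter]
    exact Finset.filter_congr fun e he =>
      ⟨fun h' => h'.2, fun h' => ⟨hWV h', h'⟩⟩
  separated U hU := by
    intro s t hst
    apply Subtype.ext
    ext e
    have key : ∀ (u v : {s : Finset B.E // s ∈ B.faces ∧ s.image B.π = U}),
        e ∈ u.1 → (∀ x : {x // x ∈ U},
          (u.1.filter (fun a => B.π a ∈ ({x.1} : Finset X))) =
          (v.1.filter (fun a => B.π a ∈ ({x.1} : Finset X)))) → e ∈ v.1 := by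
      intro u v he hx
      have hπ : B.π e ∈ U := u.2.2 ▸ Finset.mem_image_of_mem _ he
      have h1 : e ∈ u.1.filter (fun a => B.π a ∈ ({B.π e} : Finset X)) :=
        Finset.mem_filter.mpr ⟨he, by simp⟩
      rw [hx ⟨B.π e, hπ⟩] at h1
      exact (Finset.mem_filter.mp h1).1
    constructor
    · intro he
      exact key s t he (fun x => congrArg Subtype.val (congrFun hst x))
    · intro he
      exact key t s he (fun x => (congrArg Subtype.val (congrFun hst x)).symm)

/-- The functor from non-degenerate bundles over `C` to separated presheaves
on `C`, sending a bundle to its presheaf of local sections. -/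
noncomputable def bundleToPresheaf {X : Type} (C : SC X) : Bnd C ⥤ SepPsh C where
  obj B := bundlePsh B
  map {B1 B2} f := ⟨fun U hU s => ⟨s.1.image f.1, f.2.1 s.1 s.2.1, by
      rw [Finset.image_image, show B2.π ∘ f.1 = B1.π from funext f.2.2]
      exact s.2.2⟩, by
    intro U V hU hV h s
    apply Subtype.ext
    show (s.1.filter (fun e => B1.π e ∈ V)).image f.1
        = (s.1.image f.1).filter (fun e => B2.π e ∈ V)
    ext e2
    simp only [Finset.mem_image, Finset.mem_filter]
    constructor
    · rintro ⟨e, ⟨he, hv⟩, rfl⟩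
      exact ⟨⟨e, he, rfl⟩, by rw [f.2.2]; exact hv⟩
    · rintro ⟨⟨e, he, rfl⟩, hv⟩
      exact ⟨e, ⟨he, by rw [← f.2.2]; exact hv⟩, rfl⟩⟩
  map_id B := by
    apply Subtype.ext
    funext U hU s
    apply Subtype.ext
    show s.1.image id = s.1
    exact Finset.image_id
  map_comp {B1 B2 B3} f g := by
    apply Subtype.ext
    funext U hU s
    apply Subtype.ext
    show s.1.image (g.1 ∘ f.1) = (s.1.image f.1).image g.1
    exact (Finset.image_image).symm

namespace Stmt3Aux

variable {X : Type} {C : SC X}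

/-- Vertex space of the bundle associated to a separated presheaf. -/
abbrev PE (P : SepPsh C) : Type := Σ x : X, P.obj {x} (C.singleton_mem x)

/-- The vertex set of a local section. -/
noncomputable def vset (P : SepPsh C) {U : Finset X} (hU : U ∈ C.faces)
    (a : P.obj U hU) : Finset (PE P) :=
  U.attach.image fun x =>
    ⟨x.1, P.res hU (C.singleton_mem x.1) (Finset.singleton_subset_iff.mpr x.2) a⟩

lemma mem_vset (P : SepPsh C) {U : Finset X} (hU : U ∈ C.faces) (a : P.obj U hU)
    (e : PE P) : e ∈ vset P hU a ↔
      ∃ h : e.1 ∈ U,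
        e = ⟨e.1, P.res hU (C.singleton_mem e.1) (Finset.singleton_subset_iff.mpr h) a⟩ := by
  constructor
  · intro he
    simp only [vset, Finset.mem_image, Finset.mem_attach, true_and] at he
    obtain ⟨⟨x, hx⟩, hxe⟩ := he
    subst hxe
    exact ⟨hx, rfl⟩
  · rintro ⟨h, he⟩
    rw [he]
    simp only [vset, Finset.mem_image, Finset.mem_attach, true_and]
    exact ⟨⟨e.1, h⟩, rfl⟩

lemma image_fst_vset (P : SepPsh C) {U : Finset X} (hU : U ∈ C.faces)
    (a : P.obj U hU) : (vset P hU a).image Sigma.fst = U := by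
  ext x
  simp only [Finset.mem_image]
  constructor
  · rintro ⟨e, he, rfl⟩
    exact ((mem_vset P hU a e).mp he).1
  · intro hx
    exact ⟨⟨x, P.res hU (C.singleton_mem x) (Finset.singleton_subset_iff.mpr hx) a⟩,
      (mem_vset P hU a _).mpr ⟨hx, rfl⟩, rfl⟩

lemma vset_injOn_fst (P : SepPsh C) {U : Finset X} (hU : U ∈ C.faces)
    (a : P.obj U hU) : Set.InjOn (Sigma.fst : PE P → X) ↑(vset P hU a) := by
  rintro ⟨x, p⟩ he ⟨y, q⟩ hf hef
  obtain ⟨he1, he2⟩ := (mem_vset P hU a _).mp he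
  obtain ⟨hf1, hf2⟩ := (mem_vset P hU a _).mp hf
  dsimp only at hef he2 hf2 ⊢
  subst hef
  rw [he2, hf2]

lemma vset_injective (P : SepPsh C) {U : Finset X} (hU : U ∈ C.faces) :
    Function.Injective (vset P hU) := by
  intro a b hab
  apply P.separated U hU
  funext x
  have hmem : (⟨x.1, P.res hU (C.singleton_mem x.1)
      (Finset.singleton_subset_iff.mpr x.2) a⟩ : PE P) ∈ vset P hU b := by
    rw [← hab]
    exact (mem_vset P hU a _).mpr ⟨x.2, rfl⟩
  obtain ⟨h1, h2⟩ := (mem_vset P hU b _).mp hmem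
  simpa using h2

lemma vset_res (P : SepPsh C) {U V : Finset X} (hU : U ∈ C.faces) (hV : V ∈ C.faces)
    (hVU : V ⊆ U) (a : P.obj U hU) :
    vset P hV (P.res hU hV hVU a) = (vset P hU a).filter (fun e => e.1 ∈ V) := by
  ext e
  rw [mem_vset, Finset.mem_filter, mem_vset]
  constructor
  · rintro ⟨h, he⟩
    refine ⟨⟨hVU h, he.trans ?_⟩, h⟩
    exact congrArg (Sigma.mk e.1) (P.res_comp hU hV (C.singleton_mem e.1) hVU
      (Finset.singleton_subset_iff.mpr h) a)
  · rintro ⟨⟨hU', he⟩, hVmem⟩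
    refine ⟨hVmem, he.trans ?_⟩
    exact congrArg (Sigma.mk e.1) (P.res_comp hU hV (C.singleton_mem e.1) hVU
      (Finset.singleton_subset_iff.mpr hVmem) a).symm

lemma vset_subset_eq (P : SepPsh C) {U V : Finset X} (hU : U ∈ C.faces)
    (hV : V ∈ C.faces) (hVU : V ⊆ U) (a : P.obj U hU) {t : Finset (PE P)}
    (ht : t ⊆ vset P hU a) (htV : t.image Sigma.fst = V) :
    t = vset P hV (P.res hU hV hVU a) := by
  rw [vset_res]
  ext e
  rw [Finset.mem_filter]
  constructor
  · intro he
    exact ⟨ht he, htV ▸ Finset.mem_image_of_mem _ he⟩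
  · rintro ⟨hva, heV⟩
    rw [← htV, Finset.mem_image] at heV
    obtain ⟨e', he', hfst⟩ := heV
    have : e' = e := vset_injOn_fst P hU a (ht he') hva hfst
    exact this ▸ he'

/-- The bundle associated to a separated presheaf. -/
noncomputable def toBnd (P : SepPsh C) : Bnd C where
  E := PE P
  faces := {t | ∃ (U : Finset X) (hU : U ∈ C.faces) (a : P.obj U hU), t ⊆ vset P hU a}
  down_closed := by
    rintro s t ⟨U, hU, a, h⟩ hts
    exact ⟨U, hU, a, hts.trans h⟩
  vertex_mem e := by
    refine ⟨{e.1}, C.singleton_mem e.1, e.2, fun f hf => ?_⟩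
    rw [Finset.mem_singleton] at hf
    subst hf
    refine (mem_vset P _ _ _).mpr ⟨Finset.mem_singleton_self f.1, ?_⟩
    rw [P.res_id]
  π := Sigma.fst
  simplicial := by
    rintro s ⟨U, hU, a, h⟩
    exact C.down_closed hU
      (by rw [← image_fst_vset P hU a]; exact Finset.image_subset_image h)
  nondeg := by
    rintro s ⟨U, hU, a, h⟩
    exact (vset_injOn_fst P hU a).mono (Finset.coe_subset.mpr h)

/-- The canonical map from `P(U)` to sections of `toBnd P` over `U`. -/
noncomputable def secMap (P : SepPsh C) (U : Finset X) (hU : U ∈ C.faces)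
    (a : P.obj U hU) : (bundlePsh (toBnd P)).obj U hU :=
  ⟨vset P hU a, ⟨U, hU, a, subset_refl _⟩, image_fst_vset P hU a⟩

lemma secMap_bijective (P : SepPsh C) (U : Finset X) (hU : U ∈ C.faces) :
    Function.Bijective (secMap P U hU) := by
  constructor
  · intro a b hab
    exact vset_injective P hU (congrArg Subtype.val hab)
  · rintro ⟨t, ⟨U', hU', a', hsub⟩, htU⟩
    have hUU' : U ⊆ U' := by
      rw [← htU, ← image_fst_vset P hU' a']
      exact Finset.image_subset_image hsub
    exact ⟨P.res hU' hU hUU' a',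
      Subtype.ext (vset_subset_eq P hU' hU hUU' a' hsub htU).symm⟩

noncomputable def secEquiv (P : SepPsh C) (U : Finset X) (hU : U ∈ C.faces) :
    P.obj U hU ≃ (bundlePsh (toBnd P)).obj U hU :=
  Equiv.ofBijective _ (secMap_bijective P U hU)

lemma secMap_res (P : SepPsh C) {U V : Finset X} (hU : U ∈ C.faces)
    (hV : V ∈ C.faces) (h : V ⊆ U) (a : P.obj U hU) :
    secMap P V hV (P.res hU hV h a)
      = (bundlePsh (toBnd P)).res hU hV h (secMap P U hU a) :=
  Subtype.ext (vset_res P hU hV h a)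

end Stmt3Aux
namespace Stmt3Aux

variable {X : Type} {C : SC X}

/-- The canonical isomorphism between sections of `toBnd P` and `P`. -/
noncomputable def secIso (P : SepPsh C) :
    (bundleToPresheaf C).obj (toBnd P) ≅ P where
  hom := ⟨fun U hU t => (secEquiv P U hU).symm t, by
    intro U V hU hV h t
    apply (secEquiv P V hV).injective
    have h1 : secEquiv P V hV ((secEquiv P V hV).symm
        ((bundlePsh (toBnd P)).res hU hV h t))
        = (bundlePsh (toBnd P)).res hU hV h t :=
      (secEquiv P V hV).apply_symm_apply _
    have h2 : secEquiv P V hV (P.res hU hV h ((secEquiv P U hU).symm t))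
        = (bundlePsh (toBnd P)).res hU hV h t := by
      show secMap P V hV _ = _
      rw [secMap_res]
      exact congrArg _ ((secEquiv P U hU).apply_symm_apply t)
    exact h1.trans h2.symm⟩
  inv := ⟨fun U hU a => secEquiv P U hU a,
    fun U V hU hV h a => secMap_res P hU hV h a⟩
  hom_inv_id := by
    apply Subtype.ext
    funext U hU t
    exact (secEquiv P U hU).apply_symm_apply t
  inv_hom_id := by
    apply Subtype.ext
    funext U hU a
    exact (secEquiv P U hU).symm_apply_apply a

lemma filter_pi_singleton {B : Bnd C} {s : Finset B.E} (hs : s ∈ B.faces) {e : B.E}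
    (he : e ∈ s) : s.filter (fun a => B.π a ∈ ({B.π e} : Finset X)) = {e} := by
  ext a
  simp only [Finset.mem_filter, Finset.mem_singleton]
  constructor
  · rintro ⟨ha, hpa⟩
    exact B.nondeg s hs ha he hpa
  · rintro rfl
    exact ⟨he, rfl⟩

/-- The section of a bundle given by a single vertex. -/
def singSec (B : Bnd C) (e : B.E) : (bundlePsh B).obj {B.π e} (C.singleton_mem _) :=
  ⟨{e}, B.vertex_mem e, by simp⟩

lemma exists_single {B1 B2 : Bnd C} (φ : bundlePsh B1 ⟶ bundlePsh B2) (e : B1.E) :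
    ∃ e2 : B2.E, (φ.1 {B1.π e} (C.singleton_mem _) (singSec B1 e)).1 = {e2} := by
  set t := φ.1 {B1.π e} (C.singleton_mem _) (singSec B1 e)
  apply Finset.card_eq_one.mp
  have h1 : t.1.image B2.π = {B1.π e} := t.2.2
  have h2 := Finset.card_image_of_injOn (B2.nondeg t.1 t.2.1)
  rw [h1, Finset.card_singleton] at h2
  exact h2.symm

/-- The vertex map induced by a natural transformation between section
presheaves. -/
noncomputable def fullMap {B1 B2 : Bnd C} (φ : bundlePsh B1 ⟶ bundlePsh B2)
    (e : B1.E) : B2.E :=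
  (exists_single φ e).choose

lemma fullMap_spec {B1 B2 : Bnd C} (φ : bundlePsh B1 ⟶ bundlePsh B2) (e : B1.E) :
    (φ.1 {B1.π e} (C.singleton_mem _) (singSec B1 e)).1 = {fullMap φ e} :=
  (exists_single φ e).choose_spec

lemma π_fullMap {B1 B2 : Bnd C} (φ : bundlePsh B1 ⟶ bundlePsh B2) (e : B1.E) :
    B2.π (fullMap φ e) = B1.π e := by
  have h := (φ.1 {B1.π e} (C.singleton_mem _) (singSec B1 e)).2.2
  rw [fullMap_spec] at h
  simpa using h

lemma map_eq {B1 B2 : Bnd C} (φ : bundlePsh B1 ⟶ bundlePsh B2) (U : Finset X)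
    (hU : U ∈ C.faces) (s : (bundlePsh B1).obj U hU) :
    (φ.1 U hU s).1 = s.1.image (fullMap φ) := by
  have himg : (φ.1 U hU s).1.image B2.π = U := (φ.1 U hU s).2.2
  have key : ∀ e ∈ s.1,
      (φ.1 U hU s).1.filter (fun a => B2.π a ∈ ({B1.π e} : Finset X))
        = {fullMap φ e} := by
    intro e he
    have hx : B1.π e ∈ U := s.2.2 ▸ Finset.mem_image_of_mem _ he
    have hnat := φ.2 U {B1.π e} hU (C.singleton_mem _)
      (Finset.singleton_subset_iff.mpr hx) s
    have hres : (bundlePsh B1).res hU (C.singleton_mem (B1.π e))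
        (Finset.singleton_subset_iff.mpr hx) s = singSec B1 e :=
      Subtype.ext (filter_pi_singleton s.2.1 he)
    rw [hres] at hnat
    have h2 := congrArg Subtype.val hnat
    rw [fullMap_spec] at h2
    exact h2.symm
  ext e2
  rw [Finset.mem_image]
  constructor
  · intro he2
    have hx : B2.π e2 ∈ U := himg ▸ Finset.mem_image_of_mem _ he2
    rw [← s.2.2, Finset.mem_image] at hx
    obtain ⟨e, he, hpe⟩ := hx
    have hm : e2 ∈ (φ.1 U hU s).1.filter
        (fun a => B2.π a ∈ ({B1.π e} : Finset X)) :=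
      Finset.mem_filter.mpr ⟨he2, by simp [hpe]⟩
    rw [key e he] at hm
    exact ⟨e, he, (Finset.mem_singleton.mp hm).symm⟩
  · rintro ⟨e, he, rfl⟩
    have h3 : fullMap φ e ∈ (φ.1 U hU s).1.filter
        (fun a => B2.π a ∈ ({B1.π e} : Finset X)) :=
      (key e he) ▸ Finset.mem_singleton_self _
    exact (Finset.mem_filter.mp h3).1

end Stmt3Aux
/-- The category of separated `Set`-valued presheaves on a
simplicial complex `C` is equivalent to the category of non-degenerate
bundles over `C`, via the functor sending a bundle `π : A → C` to the
presheaf `U ↦ {s ∈ A : π[s] = U}` with restrictions `s ↦ s ∩ π⁻¹[V]`. -/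
theorem stmt3 {X : Type} (C : SC X) : (bundleToPresheaf C).IsEquivalence := by
  refine ⟨⟨?_⟩, ⟨?_⟩, ⟨fun P => ⟨Stmt3Aux.toBnd P, ⟨Stmt3Aux.secIso P⟩⟩⟩⟩
  · -- faithful
    intro B1 B2 f g h
    apply Subtype.ext
    funext e
    have h1 := congrFun (congrFun (congrFun (congrArg Subtype.val h) {B1.π e})
      (C.singleton_mem _)) (Stmt3Aux.singSec B1 e)
    have h2 : ({e} : Finset B1.E).image f.1 = ({e} : Finset B1.E).image g.1 :=
      congrArg Subtype.val h1
    simpa using h2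
  · -- full
    intro B1 B2 φ
    refine ⟨⟨Stmt3Aux.fullMap φ, ⟨?_, Stmt3Aux.π_fullMap φ⟩⟩, ?_⟩
    · intro s hs
      have h := (φ.1 (s.image B1.π) (B1.simplicial s hs) ⟨s, hs, rfl⟩).2.1
      exact (congrArg (fun t => t ∈ B2.faces)
        (Stmt3Aux.map_eq φ (s.image B1.π) (B1.simplicial s hs) ⟨s, hs, rfl⟩)).mp h
    · apply Subtype.ext
      funext U hU s
      apply Subtype.ext
      exact (Stmt3Aux.map_eq φ U hU s).symm
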